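/- Suppose g : [0,∞) → ℝ^n is continuously differentiable, f : [0,∞) → ℝ^n is bounded and piecewise continuous, lim_{t→∞} gᵀ(t) f(t) = 0, lim_{t→∞} g'(t) = 0, and f is persistently exciting. Then lim_{t→∞} g(t) = 0. -/

import Mathlib

open Matrix Filter intervalIntegral

/-- A bounded piecewise continuous `f : [0,∞) → ℝ^n` is persistently exciting if there are
`ε > 0`, `t₀ ≥ 0`, `T₀ > 0` with `(1/T₀) ∫_t^{t+T₀} f(s) f(s)ᵀ ds ⪰ ε I` for all `t ≥ t₀`. -/
def IsPE {ι : Type*} [Fintype ι] [DecidableEq ι] (f : ℝ → ι → ℝ) : Prop :=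
  ∃ ε > (0 : ℝ), ∃ t₀ ≥ (0 : ℝ), ∃ T₀ > (0 : ℝ), ∀ t ≥ t₀,
    Matrix.PosSemidef
      ((Matrix.of fun i j => T₀⁻¹ * ∫ s in t..(t + T₀), f s i * f s j)
        - ε • (1 : Matrix ι ι ℝ))

open MeasureTheory in

theorem stmt6' {n : ℕ} (g g' f : ℝ → Fin n → ℝ)
    (hg : ∀ t, HasDerivAt g (g' t) t) (hg'cont : Continuous g')
    (hfbdd : ∃ M : ℝ, ∀ t ≥ (0 : ℝ), ‖f t‖ ≤ M)
    (hfpc : ∃ D : Set ℝ, D.Countable ∧ ∀ t ∉ D, ContinuousAt f t)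
    (hgf : Tendsto (fun t => g t ⬝ᵥ f t) atTop (nhds 0))
    (hg'lim : Tendsto g' atTop (nhds 0))
    (hPE : ∃ ε > (0 : ℝ), ∃ t₀ ≥ (0 : ℝ), ∃ T₀ > (0 : ℝ), ∀ t ≥ t₀,
      Matrix.PosSemidef
        ((Matrix.of fun i j => T₀⁻¹ * ∫ s in t..(t + T₀), f s i * f s j)
          - ε • (1 : Matrix (Fin n) (Fin n) ℝ))) :
    Tendsto g atTop (nhds 0) := by
  obtain ⟨M, hM⟩ := hfbdd
  obtain ⟨ε, hε, t₀, ht₀, T₀, hT₀, hPE⟩ := hPE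
  have hM0 : 0 ≤ M := le_trans (norm_nonneg _) (hM 0 le_rfl)
  set K : ℝ := 1 + n * M * T₀ with hKdef
  have hK : 0 < K := by
    have : (0:ℝ) ≤ n * M * T₀ := by positivity
    linarith
  -- measurability
  have hmeas : AEMeasurable f (volume : Measure ℝ) := by
    obtain ⟨D, hDc, hD⟩ := hfpc
    have h1 : ContinuousOn f Dᶜ := fun x hx => (hD x hx).continuousWithinAt
    have h2 : AEMeasurable f ((volume : Measure ℝ).restrict Dᶜ) :=
      h1.aemeasurable hDc.measurableSet.compl
    have h3 : (volume : Measure ℝ).restrict Dᶜ = volume := by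
      have := Measure.restrict_compl_add_restrict (μ := (volume : Measure ℝ))
        hDc.measurableSet
      rw [Measure.restrict_eq_zero.2 (hDc.measure_zero volume), add_zero] at this
      exact this
    rwa [h3] at h2
  have hmeasi : ∀ i, AEMeasurable (fun s => f s i) (volume : Measure ℝ) :=
    fun i => (measurable_pi_apply i).comp_aemeasurable hmeas
  have hfabs : ∀ s ≥ (0:ℝ), ∀ i, |f s i| ≤ M := by
    intro s hs i
    exact le_trans (norm_le_pi_norm (f s) i) (hM s hs)
  -- integrability of products
  have hint : ∀ (t : ℝ), 0 ≤ t → ∀ i j : Fin n,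
      IntervalIntegrable (fun s => f s i * f s j) volume t (t + T₀) := by
    intro t ht i j
    rw [intervalIntegrable_iff_integrableOn_Ioc_of_le (by linarith)]
    apply Integrable.mono' (g := fun _ => M * M)
    · exact integrableOn_const measure_Ioc_lt_top.ne
    · exact (((hmeasi i).mul (hmeasi j)).restrict).aestronglyMeasurable
    · rw [ae_restrict_iff' measurableSet_Ioc]
      refine Eventually.of_forall fun s hs => ?_
      have hs0 : (0:ℝ) ≤ s := le_trans ht hs.1.le
      calc ‖f s i * f s j‖ = |f s i| * |f s j| := abs_mul _ _
        _ ≤ M * M := mul_le_mul (hfabs s hs0 i) (hfabs s hs0 j) (abs_nonneg _) hM0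
  -- quadratic expansion of the integral
  have hexp : ∀ (t : ℝ), 0 ≤ t → ∀ v : Fin n → ℝ,
      ∫ s in t..(t + T₀), (v ⬝ᵥ f s) ^ 2
        = ∑ i, ∑ j, v i * v j * ∫ s in t..(t + T₀), f s i * f s j := by
    intro t ht v
    have hsum : ∀ i : Fin n,
        IntervalIntegrable (fun s => ∑ j, v i * v j * (f s i * f s j)) volume t (t + T₀) := by
      intro i
      have h := IntervalIntegrable.sum (μ := volume) (a := t) (b := t + T₀) Finset.univ
        (f := fun (j : Fin n) => fun s => v i * v j * (f s i * f s j))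
        (fun j _ => (hint t ht i j).const_mul _)
      simpa only [Finset.sum_fn] using h
    have h1 : ∀ s : ℝ, (v ⬝ᵥ f s) ^ 2 = ∑ i, ∑ j, v i * v j * (f s i * f s j) := by
      intro s
      rw [sq, dotProduct, Finset.sum_mul_sum]
      exact Finset.sum_congr rfl fun i _ => Finset.sum_congr rfl fun j _ => by ring
    rw [intervalIntegral.integral_congr (g := fun s => ∑ i, ∑ j, v i * v j * (f s i * f s j))
      (fun s _ => h1 s)]
    rw [intervalIntegral.integral_finset_sum (fun i _ => hsum i)]
    refine Finset.sum_congr rfl fun i _ => ?_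
    rw [intervalIntegral.integral_finset_sum (fun j _ => (hint t ht i j).const_mul _)]
    exact Finset.sum_congr rfl fun j _ => intervalIntegral.integral_const_mul _ _
  -- integrability of (v ⬝ᵥ f s)^2
  have hintsq : ∀ (t : ℝ), 0 ≤ t → ∀ v : Fin n → ℝ,
      IntervalIntegrable (fun s => (v ⬝ᵥ f s) ^ 2) volume t (t + T₀) := by
    intro t ht v
    have h1 : (fun s => (v ⬝ᵥ f s) ^ 2)
        = fun s => ∑ i, ∑ j, v i * v j * (f s i * f s j) := by
      funext s
      rw [sq, dotProduct, Finset.sum_mul_sum]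
      exact Finset.sum_congr rfl fun i _ => Finset.sum_congr rfl fun j _ => by ring
    rw [h1]
    have h := IntervalIntegrable.sum (μ := volume) (a := t) (b := t + T₀) Finset.univ
      (f := fun (i : Fin n) => fun s => ∑ j, v i * v j * (f s i * f s j))
      (fun i _ => by
        have h2 := IntervalIntegrable.sum (μ := volume) (a := t) (b := t + T₀) Finset.univ
          (f := fun (j : Fin n) => fun s => v i * v j * (f s i * f s j))
          (fun j _ => (hint t ht i j).const_mul _)
        convert h2 using 1
        exact (Finset.sum_fn _ _).symm)
    simpa only [Finset.sum_fn] using h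
  -- Key PE estimate
  have hkey : ∀ (t : ℝ), t ≥ t₀ → ∀ v : Fin n → ℝ,
      ε * ∑ i, v i ^ 2 ≤ T₀⁻¹ * ∫ s in t..(t + T₀), (v ⬝ᵥ f s) ^ 2 := by
    intro t ht v
    have hpsd := (posSemidef_iff_dotProduct_mulVec.1 (hPE t ht)).2 v
    have ht0 : (0:ℝ) ≤ t := le_trans ht₀ ht
    rw [hexp t ht0 v]
    simp only [star_trivial, sub_mulVec, dotProduct_sub, sub_nonneg, smul_mulVec,
      one_mulVec, dotProduct_smul] at hpsd
    calc ε * ∑ i, v i ^ 2 = ε • (v ⬝ᵥ v) := by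
          simp [dotProduct, smul_eq_mul, Finset.mul_sum, sq]
      _ ≤ v ⬝ᵥ ((Matrix.of fun i j => T₀⁻¹ * ∫ s in t..(t + T₀), f s i * f s j) *ᵥ v) := hpsd
      _ = T₀⁻¹ * ∑ i, ∑ j, v i * v j * ∫ s in t..(t + T₀), f s i * f s j := by
          simp only [dotProduct, mulVec, Matrix.of_apply, Finset.mul_sum]
          refine Finset.sum_congr rfl fun i _ => ?_
          refine Finset.sum_congr rfl fun j _ => ?_
          ring
  -- main estimate
  have hmain : ∀ δ : ℝ, 0 < δ → ∀ᶠ t in atTop, ε * ∑ i, (g t i) ^ 2 ≤ (δ * K) ^ 2 := by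
    intro δ hδ
    have h1 : ∀ᶠ s in atTop, |g s ⬝ᵥ f s| < δ := by
      have := Metric.tendsto_nhds.1 hgf δ hδ
      simpa [Real.dist_eq] using this
    have h2 : ∀ᶠ s in atTop, ‖g' s‖ < δ := by
      have := Metric.tendsto_nhds.1 hg'lim δ hδ
      simpa [dist_eq_norm] using this
    obtain ⟨T₁, hT₁⟩ := (h1.and h2).exists_forall_of_atTop
    filter_upwards [eventually_ge_atTop (max T₁ t₀)] with t htT
    have htt₀ : t ≥ t₀ := le_trans (le_max_right _ _) htT
    have htT₁ : t ≥ T₁ := le_trans (le_max_left _ _) htT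
    have ht0 : (0:ℝ) ≤ t := le_trans ht₀ htt₀
    -- Lipschitz bound on [t, t+T₀]
    have hlip : ∀ s ∈ Set.Icc t (t + T₀), ‖g s - g t‖ ≤ δ * T₀ := by
      intro s hs
      have hb : ∀ x ∈ Set.Icc t (t + T₀), ‖g' x‖ ≤ δ := fun x hx =>
        (hT₁ x (le_trans htT₁ hx.1)).2.le
      have hd : ∀ x ∈ Set.Icc t (t + T₀), HasDerivWithinAt g (g' x) (Set.Icc t (t + T₀)) x :=
        fun x _ => (hg x).hasDerivWithinAt
      have := (convex_Icc t (t + T₀)).norm_image_sub_le_of_norm_hasDerivWithin_le hd hb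
        (Set.left_mem_Icc.2 (by linarith)) hs
      calc ‖g s - g t‖ ≤ δ * ‖s - t‖ := this
        _ ≤ δ * T₀ := by
            apply mul_le_mul_of_nonneg_left _ hδ.le
            rw [Real.norm_eq_abs, abs_of_nonneg (by linarith [hs.1])]
            linarith [hs.2]
    -- pointwise bound
    have hpt : ∀ s ∈ Set.Icc t (t + T₀), (g t ⬝ᵥ f s) ^ 2 ≤ (δ * K) ^ 2 := by
      intro s hs
      have hs0 : (0:ℝ) ≤ s := le_trans ht0 hs.1
      have habs : |g t ⬝ᵥ f s| ≤ δ * K := by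
        have hsplit : g t ⬝ᵥ f s = g s ⬝ᵥ f s + ∑ i, (g t i - g s i) * f s i := by
          rw [dotProduct, dotProduct, ← Finset.sum_add_distrib]
          exact Finset.sum_congr rfl fun i _ => by ring
        have hb2 : |∑ i, (g t i - g s i) * f s i| ≤ n * (δ * T₀) * M := by
          calc |∑ i, (g t i - g s i) * f s i| ≤ ∑ i, |(g t i - g s i) * f s i| :=
                Finset.abs_sum_le_sum_abs _ _
            _ ≤ ∑ _i : Fin n, (δ * T₀) * M := by
                refine Finset.sum_le_sum fun i _ => ?_
                rw [abs_mul]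
                refine mul_le_mul ?_ (hfabs s hs0 i) (abs_nonneg _) (by positivity)
                have : |g t i - g s i| ≤ ‖g t - g s‖ := by
                  have := norm_le_pi_norm (g t - g s) i
                  simpa [Real.norm_eq_abs] using this
                calc |g t i - g s i| ≤ ‖g t - g s‖ := this
                  _ = ‖g s - g t‖ := norm_sub_rev _ _
                  _ ≤ δ * T₀ := hlip s hs
            _ = n * (δ * T₀) * M := by
                rw [Finset.sum_const, Finset.card_univ, Fintype.card_fin]
                push_cast; ring
        calc |g t ⬝ᵥ f s| ≤ |g s ⬝ᵥ f s| + |∑ i, (g t i - g s i) * f s i| := by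
              rw [hsplit]; exact abs_add_le _ _
          _ ≤ δ + n * (δ * T₀) * M := by
              have hsT₁ : s ≥ T₁ := le_trans htT₁ hs.1
              exact add_le_add (hT₁ s hsT₁).1.le hb2
          _ = δ * K := by rw [hKdef]; ring
      have h' := abs_le.1 habs
      exact sq_le_sq' (by linarith [h'.1]) h'.2
    -- integrate the bound
    have hInt := intervalIntegral.integral_mono_on (μ := volume)
      (f := fun s => (g t ⬝ᵥ f s) ^ 2) (g := fun _ => (δ * K) ^ 2)
      (by linarith : t ≤ t + T₀) (hintsq t ht0 (g t)) intervalIntegrable_const hpt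
    have hconst : (∫ _ in t..(t + T₀), (δ * K) ^ 2) = T₀ * (δ * K) ^ 2 := by
      rw [intervalIntegral.integral_const, smul_eq_mul, add_sub_cancel_left]
    calc ε * ∑ i, (g t i) ^ 2 ≤ T₀⁻¹ * ∫ s in t..(t + T₀), (g t ⬝ᵥ f s) ^ 2 :=
          hkey t htt₀ (g t)
      _ ≤ T₀⁻¹ * (T₀ * (δ * K) ^ 2) := by
          apply mul_le_mul_of_nonneg_left _ (inv_nonneg.2 hT₀.le)
          rw [← hconst]; exact hInt
      _ = (δ * K) ^ 2 := by field_simp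
  -- conclude: ∑ (g t i)^2 → 0
  have hS : Tendsto (fun t => ∑ i, (g t i) ^ 2) atTop (nhds 0) := by
    rw [Metric.tendsto_atTop]
    intro η hη
    set δ : ℝ := Real.sqrt (ε * η) / (2 * K) with hδdef
    have hδ : 0 < δ := by
      apply div_pos _ (by linarith)
      exact Real.sqrt_pos.2 (by positivity)
    obtain ⟨N, hN⟩ := (hmain δ hδ).exists_forall_of_atTop
    refine ⟨N, fun t ht => ?_⟩
    have hb := hN t ht
    have hδK : (δ * K) ^ 2 = ε * η / 4 := by
      rw [hδdef]
      rw [div_mul_eq_mul_div, mul_comm (2:ℝ) K, ← div_div, mul_div_assoc,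
        div_self (ne_of_gt hK), mul_one]
      rw [div_pow, Real.sq_sqrt (by positivity)]
      ring
    rw [hδK] at hb
    have hSnn : 0 ≤ ∑ i, (g t i) ^ 2 := Finset.sum_nonneg fun i _ => sq_nonneg _
    rw [Real.dist_eq, sub_zero, abs_of_nonneg hSnn]
    have : ε * ∑ i, (g t i) ^ 2 < ε * η := by nlinarith
    exact lt_of_mul_lt_mul_left this hε.le
  -- componentwise convergence
  rw [tendsto_pi_nhds]
  intro i
  have hzero : (0 : Fin n → ℝ) i = 0 := rfl
  rw [hzero]
  refine squeeze_zero_norm (a := fun t => Real.sqrt (∑ j, (g t j) ^ 2)) (fun t => ?_) ?_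
  · 
    rw [Real.norm_eq_abs, ← Real.sqrt_sq_eq_abs]
    apply Real.sqrt_le_sqrt
    exact Finset.single_le_sum (f := fun j => (g t j) ^ 2) (fun j _ => sq_nonneg _)
      (Finset.mem_univ i)
  · have := (Real.continuous_sqrt.tendsto 0).comp hS
    simpa [Function.comp_def] using this

theorem stmt6 {n : ℕ} (g g' f : ℝ → Fin n → ℝ)
    (hg : ∀ t, HasDerivAt g (g' t) t) (hg'cont : Continuous g')
    (hfbdd : ∃ M : ℝ, ∀ t ≥ (0 : ℝ), ‖f t‖ ≤ M)
    (hfpc : ∃ D : Set ℝ, D.Countable ∧ ∀ t ∉ D, ContinuousAt f t)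
    (hgf : Tendsto (fun t => g t ⬝ᵥ f t) atTop (nhds 0))
    (hg'lim : Tendsto g' atTop (nhds 0))
    (hPE : IsPE f) :
    Tendsto g atTop (nhds 0) := by
  exact stmt6' g g' f hg hg'cont hfbdd hfpc hgf hg'lim hPE
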